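/- arXiv:1712.03513 — 13 statements merged into one kernel-verified Lean document; each statement's English description precedes it below -/
import Mathlib

section
/- Let X be a distributive lattice and Y a conditionally complete lattice. Suppose Φ, Ψ : X → Y satisfy Φ(x) ≤ Ψ(x) for all x ∈ X, Φ(x ∨ y) ≤ Φ(x) ∨ Φ(y) for all x, y ∈ X, and Ψ(x) ∨ Ψ(y) ≤ Ψ(x ∨ y) for all x, y ∈ X. Then there exists a join homomorphism F : X → Y such that Φ(x) ≤ F(x) ≤ Ψ(x) for every x ∈ X. -/
/-- Lemma 1 (separation theorem): if `Φ ≤ Ψ`, `Φ` is sub-join and `Ψ` is super-join,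
then some join homomorphism `F` separates them. -/
theorem separation_join_hom {X Y : Type*} [DistribLattice X]
    [ConditionallyCompleteLattice Y]
    (Φ Ψ : X → Y) (hle : ∀ x, Φ x ≤ Ψ x)
    (hΦ : ∀ x y, Φ (x ⊔ y) ≤ Φ x ⊔ Φ y)
    (hΨ : ∀ x y, Ψ x ⊔ Ψ y ≤ Ψ (x ⊔ y)) :
    ∃ F : X → Y, (∀ x y, F (x ⊔ y) = F x ⊔ F y) ∧
      ∀ x, Φ x ≤ F x ∧ F x ≤ Ψ x := by
  classical
  -- Ψ is monotone
  have hmono : ∀ a b : X, a ≤ b → Ψ a ≤ Ψ b := by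
    intro a b h
    calc Ψ a ≤ Ψ a ⊔ Ψ b := le_sup_left
      _ ≤ Ψ (a ⊔ b) := hΨ a b
      _ = Ψ b := by rw [sup_eq_right.2 h]
  -- the set of joins of values of Φ over finite decompositions of x
  set S : X → Set Y := fun x =>
    {y | ∃ (s : Finset X) (hs : s.Nonempty), s.sup' hs id = x ∧ s.sup' hs Φ = y} with hS
  have hmem : ∀ x, Φ x ∈ S x := by
    intro x
    exact ⟨{x}, Finset.singleton_nonempty x, by simp, by simp⟩
  have hub : ∀ x, Ψ x ∈ upperBounds (S x) := by
    rintro x y ⟨s, hs, hsup, rfl⟩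
    refine Finset.sup'_le _ _ fun z hz => (hle z).trans (hmono _ _ ?_)
    rw [← hsup]
    exact Finset.le_sup' id hz
  have hbdd : ∀ x, BddAbove (S x) := fun x => ⟨Ψ x, hub x⟩
  have hne : ∀ x, (S x).Nonempty := fun x => ⟨Φ x, hmem x⟩
  refine ⟨fun x => sSup (S x), fun x y => ?_, fun x =>
    ⟨le_csSup (hbdd x) (hmem x), csSup_le (hne x) (hub x)⟩⟩
  apply le_antisymm
  · -- F (x ⊔ y) ≤ F x ⊔ F y
    refine csSup_le (hne _) ?_
    rintro c ⟨s, hs, hsup, rfl⟩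
    have key : ∀ z ∈ s, Φ z ≤ Φ (z ⊓ x) ⊔ Φ (z ⊓ y) := by
      intro z hz
      have hzle : z ≤ x ⊔ y := hsup ▸ Finset.le_sup' id hz
      have : z = (z ⊓ x) ⊔ (z ⊓ y) := by
        rw [← inf_sup_left, inf_eq_left.2 hzle]
      calc Φ z = Φ ((z ⊓ x) ⊔ (z ⊓ y)) := by rw [← this]
        _ ≤ Φ (z ⊓ x) ⊔ Φ (z ⊓ y) := hΦ _ _
    have memx : s.sup' hs (fun z => Φ (z ⊓ x)) ∈ S x := by
      refine ⟨s.image (· ⊓ x), hs.image _, ?_, ?_⟩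
      · rw [Finset.sup'_image]
        have h1 : s.sup' hs (fun i => id i ⊓ x) = s.sup' hs id ⊓ x :=
          (Finset.sup'_inf_distrib_right hs id x).symm
        exact h1.trans (by rw [hsup]; exact inf_eq_right.2 le_sup_left)
      · rw [Finset.sup'_image]; rfl
    have memy : s.sup' hs (fun z => Φ (z ⊓ y)) ∈ S y := by
      refine ⟨s.image (· ⊓ y), hs.image _, ?_, ?_⟩
      · rw [Finset.sup'_image]
        have h1 : s.sup' hs (fun i => id i ⊓ y) = s.sup' hs id ⊓ y :=
          (Finset.sup'_inf_distrib_right hs id y).symm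
        exact h1.trans (by rw [hsup]; exact inf_eq_right.2 le_sup_right)
      · rw [Finset.sup'_image]; rfl
    calc s.sup' hs Φ ≤ s.sup' hs (fun z => Φ (z ⊓ x)) ⊔ s.sup' hs (fun z => Φ (z ⊓ y)) := by
          refine Finset.sup'_le _ _ fun z hz => (key z hz).trans ?_
          exact sup_le_sup (Finset.le_sup' (fun z => Φ (z ⊓ x)) hz) (Finset.le_sup' (fun z => Φ (z ⊓ y)) hz)
      _ ≤ sSup (S x) ⊔ sSup (S y) :=
          sup_le_sup (le_csSup (hbdd x) memx) (le_csSup (hbdd y) memy)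
  · -- F x ⊔ F y ≤ F (x ⊔ y)
    refine sup_le (csSup_le (hne x) ?_) (csSup_le (hne y) ?_)
    · rintro a ⟨s, hs, hsup, rfl⟩
      refine le_trans ?_ (le_csSup (hbdd _) (?_ : s.sup' hs Φ ⊔ Φ y ∈ S (x ⊔ y)))
      · exact le_sup_left
      · refine ⟨s ∪ {y}, hs.mono Finset.subset_union_left, ?_, ?_⟩
        · rw [Finset.sup'_union hs (Finset.singleton_nonempty y), hsup]
          simp
        · rw [Finset.sup'_union hs (Finset.singleton_nonempty y)]
          simp
    · rintro a ⟨s, hs, hsup, rfl⟩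
      refine le_trans ?_ (le_csSup (hbdd _) (?_ : Φ x ⊔ s.sup' hs Φ ∈ S (x ⊔ y)))
      · exact le_sup_right
      · refine ⟨{x} ∪ s, (Finset.singleton_nonempty x).mono Finset.subset_union_left, ?_, ?_⟩
        · rw [Finset.sup'_union (Finset.singleton_nonempty x) hs, hsup]
          simp
        · rw [Finset.sup'_union (Finset.singleton_nonempty x) hs]
          simp
end

section
/- Let X be a distributive lattice and Y a conditionally complete lattice. Suppose Φ, Ψ : X → Y satisfy Ψ(x) ≤ Φ(x) for all x ∈ X, Φ(x) ∧ Φ(y) ≤ Φ(x ∧ y) for all x, y ∈ X, and Ψ(x ∧ y) ≤ Ψ(x) ∧ Ψ(y) for all x, y ∈ X. Then there exists a meet homomorphism F : X → Y such that Ψ(x) ≤ F(x) ≤ Φ(x) for every x ∈ X. -/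
/-- Dual separation theorem: if `Ψ ≤ Φ`, `Φ` is super-meet and `Ψ` is sub-meet,
then some meet homomorphism `F` separates them. -/
theorem separation_meet_hom {X Y : Type*} [DistribLattice X]
    [ConditionallyCompleteLattice Y]
    (Φ Ψ : X → Y) (hle : ∀ x, Ψ x ≤ Φ x)
    (hΦ : ∀ x y, Φ x ⊓ Φ y ≤ Φ (x ⊓ y))
    (hΨ : ∀ x y, Ψ (x ⊓ y) ≤ Ψ x ⊓ Ψ y) :
    ∃ F : X → Y, (∀ x y, F (x ⊓ y) = F x ⊓ F y) ∧
      ∀ x, Ψ x ≤ F x ∧ F x ≤ Φ x := by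
  -- Ψ is monotone
  have hΨmono : ∀ {a b : X}, a ≤ b → Ψ a ≤ Ψ b := by
    intro a b hab
    have := (hΨ a b).trans inf_le_right
    rwa [inf_eq_left.mpr hab] at this
  set F : X → Y := fun x => sInf (Φ '' {y | x ≤ y}) with hF
  have hne : ∀ x : X, (Φ '' {y | x ≤ y}).Nonempty :=
    fun x => ⟨Φ x, x, le_refl x, rfl⟩
  have hbdd : ∀ x : X, BddBelow (Φ '' {y | x ≤ y}) := by
    intro x
    refine ⟨Ψ x, ?_⟩
    rintro _ ⟨y, hy, rfl⟩
    exact (hΨmono hy).trans (hle y)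
  have hle_Φ : ∀ x z : X, x ≤ z → F x ≤ Φ z := by
    intro x z hz
    exact csInf_le (hbdd x) ⟨z, hz, rfl⟩
  have hge : ∀ (x : X) (c : Y), (∀ z, x ≤ z → c ≤ Φ z) → c ≤ F x := by
    intro x c hc
    refine le_csInf (hne x) ?_
    rintro _ ⟨z, hz, rfl⟩
    exact hc z hz
  have hFmono : ∀ {a b : X}, a ≤ b → F a ≤ F b := by
    intro a b hab
    exact hge b _ fun z hz => hle_Φ a z (hab.trans hz)
  refine ⟨F, fun x y => ?_, fun x => ?_⟩
  · apply le_antisymm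
    · exact le_inf (hFmono inf_le_left) (hFmono inf_le_right)
    · refine hge _ _ fun z hz => ?_
      have h1 : F x ≤ Φ (z ⊔ x) := hle_Φ x _ le_sup_right
      have h2 : F y ≤ Φ (z ⊔ y) := hle_Φ y _ le_sup_right
      calc F x ⊓ F y ≤ Φ (z ⊔ x) ⊓ Φ (z ⊔ y) := inf_le_inf h1 h2
        _ ≤ Φ ((z ⊔ x) ⊓ (z ⊔ y)) := hΦ _ _
        _ = Φ z := by rw [← sup_inf_left, sup_eq_left.mpr hz]
  · exact ⟨hge x _ fun z hz => (hΨmono hz).trans (hle z), hle_Φ x x le_rfl⟩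
end

section
/- Let L be a distributive lattice and B a complete Boolean algebra. Suppose Ψ₂, Φ₂, Φ₁, Ψ₁ : L → B satisfy Ψ₂(x) ≤ Φ₂(x) ≤ Φ₁(x) ≤ Ψ₁(x) for all x ∈ L, together with the inequalities Ψ₂(x ∧ y) ≤ Ψ₂(x) ∧ Ψ₂(y), Φ₂(x) ∧ Φ₂(y) ≤ Φ₂(x ∧ y), Φ₁(x ∨ y) ≤ Φ₁(x) ∨ Φ₁(y), and Ψ₁(x) ∨ Ψ₁(y) ≤ Ψ₁(x ∨ y) for all x, y ∈ L. Then there exists a lattice homomorphism H : L → B such that Ψ₂(x) ≤ H(x) ≤ Ψ₁(x) for every x ∈ L. -/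
open Finset

namespace SandwichAux

variable {L B : Type*} [DistribLattice L] [CompleteBooleanAlgebra B]

/-- Infimum over finite covers of `x` of the sup of `Ψ₁`. -/
def Pfun (Ψ₁ : L → B) (x : L) : B :=
  ⨅ (s : Finset L) (h : s.Nonempty) (_ : x ≤ s.sup' h id), s.sup' h Ψ₁

lemma Pfun_le (Ψ₁ : L → B) (x : L) : Pfun Ψ₁ x ≤ Ψ₁ x := by
  refine le_trans (iInf_le _ {x}) ?_
  refine le_trans (iInf_le _ (singleton_nonempty x)) ?_
  refine le_trans (iInf_le _ (by simp)) ?_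
  simp

lemma Pfun_mono (Ψ₁ : L → B) {x y : L} (hxy : x ≤ y) : Pfun Ψ₁ x ≤ Pfun Ψ₁ y := by
  refine le_iInf fun s => le_iInf fun h => le_iInf fun hc => ?_
  exact le_trans (iInf_le _ s) (le_trans (iInf_le _ h) (iInf_le _ (hxy.trans hc)))

lemma cover_lemma (Φ₁ Ψ₁ : L → B) (h23 : ∀ x, Φ₁ x ≤ Ψ₁ x)
    (hΦ₁ : ∀ x y, Φ₁ (x ⊔ y) ≤ Φ₁ x ⊔ Φ₁ y)
    (hΨ₁ : ∀ x y, Ψ₁ x ⊔ Ψ₁ y ≤ Ψ₁ (x ⊔ y)) (s : Finset L) (h : s.Nonempty) :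
    ∀ y : L, y ≤ s.sup' h id → Φ₁ y ≤ s.sup' h Ψ₁ := by
  have hmono : ∀ a b : L, a ≤ b → Ψ₁ a ≤ Ψ₁ b := fun a b hab =>
    le_trans le_sup_left (le_trans (hΨ₁ a b) (by rw [sup_eq_right.2 hab]))
  induction h using Finset.Nonempty.cons_induction with
  | singleton a =>
    intro y hy
    simpa using (h23 y).trans (hmono _ _ (by simpa using hy))
  | cons a t ha ht ih =>
    intro y hy
    rw [sup'_cons ht] at hy ⊢
    replace hy : y ≤ a ⊔ t.sup' ht id := hy
    have hdec : y = (y ⊓ a) ⊔ (y ⊓ t.sup' ht id) := by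
      rw [← inf_sup_left, inf_eq_left.2 hy]
    calc Φ₁ y = Φ₁ ((y ⊓ a) ⊔ (y ⊓ t.sup' ht id)) := by rw [← hdec]
      _ ≤ Φ₁ (y ⊓ a) ⊔ Φ₁ (y ⊓ t.sup' ht id) := hΦ₁ _ _
      _ ≤ Ψ₁ a ⊔ t.sup' ht Ψ₁ :=
        sup_le_sup ((h23 _).trans (hmono _ _ inf_le_right)) (ih _ inf_le_right)

lemma Pfun_subjoin (Ψ₁ : L → B) (x y : L) :
    Pfun Ψ₁ (x ⊔ y) ≤ Pfun Ψ₁ x ⊔ Pfun Ψ₁ y := by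
  classical
  have key : ∀ (s : Finset L) (hs : s.Nonempty), x ≤ s.sup' hs id →
      ∀ (t : Finset L) (ht : t.Nonempty), y ≤ t.sup' ht id →
      Pfun Ψ₁ (x ⊔ y) ≤ s.sup' hs Ψ₁ ⊔ t.sup' ht Ψ₁ := by
    intro s hs hxs t ht hyt
    have hne : (s ∪ t).Nonempty := hs.mono subset_union_left
    have hcov : x ⊔ y ≤ (s ∪ t).sup' hne id := by
      rw [sup'_union hs ht id]; exact sup_le_sup hxs hyt
    refine le_trans (iInf_le _ (s ∪ t)) (le_trans (iInf_le _ hne)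
      (le_trans (iInf_le _ hcov) ?_))
    rw [sup'_union hs ht Ψ₁]
  unfold Pfun
  simp only [iInf_sup_eq, sup_iInf_eq]
  refine le_iInf fun s1 => le_iInf fun h1 => le_iInf fun hc1 =>
    le_iInf fun s2 => le_iInf fun h2 => le_iInf fun hc2 => ?_
  first
  | exact key s1 h1 hc1 s2 h2 hc2
  | exact key s2 h2 hc2 s1 h1 hc1

end SandwichAux

open SandwichAux in
/-- Combination of the separation lemma with Kubiś' theorem: a lattice homomorphism
squeezed between `Ψ₂` and `Ψ₁`. -/
theorem sandwich_lattice_hom {L B : Type*} [DistribLattice L]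
    [CompleteBooleanAlgebra B]
    (Ψ₂ Φ₂ Φ₁ Ψ₁ : L → B)
    (h21 : ∀ x, Ψ₂ x ≤ Φ₂ x) (h22 : ∀ x, Φ₂ x ≤ Φ₁ x) (h23 : ∀ x, Φ₁ x ≤ Ψ₁ x)
    (hΨ₂ : ∀ x y, Ψ₂ (x ⊓ y) ≤ Ψ₂ x ⊓ Ψ₂ y)
    (hΦ₂ : ∀ x y, Φ₂ x ⊓ Φ₂ y ≤ Φ₂ (x ⊓ y))
    (hΦ₁ : ∀ x y, Φ₁ (x ⊔ y) ≤ Φ₁ x ⊔ Φ₁ y)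
    (hΨ₁ : ∀ x y, Ψ₁ x ⊔ Ψ₁ y ≤ Ψ₁ (x ⊔ y)) :
    ∃ H : L → B, (∀ x y, H (x ⊔ y) = H x ⊔ H y) ∧
      (∀ x y, H (x ⊓ y) = H x ⊓ H y) ∧
      ∀ x, Ψ₂ x ≤ H x ∧ H x ≤ Ψ₁ x := by
  classical
  set S : Set (L → B) :=
    {F | (∀ x y : L, x ≤ y → F x ≤ F y) ∧ (∀ x y : L, F x ⊓ F y ≤ F (x ⊓ y)) ∧
      ∀ x, F x ≤ Pfun Ψ₁ x} with hS
  set G0 : L → B := fun x => ⨆ (y : L) (_ : y ≤ x), Φ₂ y with hG0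
  have hG0S : G0 ∈ S := by
    refine ⟨?_, ?_, ?_⟩
    · intro x y hxy
      exact iSup₂_le fun z hz => le_iSup₂_of_le z (hz.trans hxy) le_rfl
    · intro x y
      simp only [hG0, iSup_inf_eq, inf_iSup_eq]
      refine iSup₂_le fun z hz => iSup₂_le fun w hw => ?_
      first
      | exact le_iSup₂_of_le (z ⊓ w) (inf_le_inf hz hw) (hΦ₂ z w)
      | exact le_iSup₂_of_le (w ⊓ z) (inf_le_inf hw hz) (hΦ₂ w z)
    · intro x
      refine iSup₂_le fun z hz => ?_
      refine le_iInf fun s => le_iInf fun hs => le_iInf fun hc => ?_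
      exact (h22 z).trans (cover_lemma Φ₁ Ψ₁ h23 hΦ₁ hΨ₁ s hs z (hz.trans hc))
  obtain ⟨F, hG0F, hFS, hFmax⟩ : ∃ F, G0 ≤ F ∧ Maximal (· ∈ S) F := by
    refine zorn_le_nonempty₀ S ?_ G0 hG0S
    intro c hcS hchain F₀ hF₀
    refine ⟨fun x => ⨆ F ∈ c, F x, ⟨?_, ?_, ?_⟩, ?_⟩
    · intro x y hxy
      exact iSup₂_le fun F hF => le_iSup₂_of_le F hF ((hcS hF).1 x y hxy)
    · intro x y
      simp only [iSup_inf_eq, inf_iSup_eq]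
      refine iSup₂_le fun F1 h1 => iSup₂_le fun F2 h2 => ?_
      rcases hchain.total h1 h2 with h | h
      all_goals first
      | exact le_iSup₂_of_le F2 h2
          (le_trans (inf_le_inf (h _) (le_refl _)) ((hcS h2).2.1 x y))
      | exact le_iSup₂_of_le F2 h2
          (le_trans (inf_le_inf (le_refl _) (h _)) ((hcS h2).2.1 x y))
      | exact le_iSup₂_of_le F1 h1
          (le_trans (inf_le_inf (h _) (le_refl _)) ((hcS h1).2.1 x y))
      | exact le_iSup₂_of_le F1 h1
          (le_trans (inf_le_inf (le_refl _) (h _)) ((hcS h1).2.1 x y))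
    · intro x
      exact iSup₂_le fun F hF => (hcS hF).2.2 x
    · intro F hF x
      exact le_iSup₂_of_le F hF le_rfl
  have hFmono := hFS.1
  have hFsub := hFS.2.1
  have hFP := hFS.2.2
  have hcib : ∀ p : B, pᶜ ⊓ p = ⊥ := fun p => by rw [inf_comm, inf_compl_eq_bot']
  set b : L → B := fun a => ⨅ y : L, (F y)ᶜ ⊔ Pfun Ψ₁ (y ⊓ a) with hb
  have key : ∀ a y : L, b a ⊓ F y ≤ F (y ⊓ a) := by
    intro a y₀
    set F' : L → B := fun x => F x ⊔ ⨆ (y : L) (_ : y ⊓ a ≤ x), (b a ⊓ F y) with hF'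
    have hbP : ∀ y x : L, y ⊓ a ≤ x → b a ⊓ F y ≤ Pfun Ψ₁ x := by
      intro y x hyx
      calc b a ⊓ F y ≤ ((F y)ᶜ ⊔ Pfun Ψ₁ (y ⊓ a)) ⊓ F y :=
            inf_le_inf_right _ (iInf_le _ y)
        _ = ((F y)ᶜ ⊓ F y) ⊔ (Pfun Ψ₁ (y ⊓ a) ⊓ F y) := by rw [inf_sup_right]
        _ ≤ Pfun Ψ₁ x := by
            rw [hcib]
            simpa using (inf_le_left.trans (Pfun_mono Ψ₁ hyx))
    have hF'S : F' ∈ S := by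
      refine ⟨?_, ?_, ?_⟩
      · intro x y hxy
        refine sup_le_sup (hFmono x y hxy) ?_
        exact iSup₂_le fun z hz => le_iSup₂_of_le z (hz.trans hxy) le_rfl
      · intro x x'
        have expand : ∀ p q r s : B,
            (p ⊔ q) ⊓ (r ⊔ s) = ((p ⊓ r) ⊔ (p ⊓ s)) ⊔ ((q ⊓ r) ⊔ (q ⊓ s)) := by
          intro p q r s
          rw [inf_sup_right, inf_sup_left, inf_sup_left]
        simp only [hF']
        rw [expand]
        refine sup_le (sup_le ?_ ?_) (sup_le ?_ ?_)
        · exact le_sup_of_le_left (hFsub x x')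
        · rw [inf_iSup_eq]
          refine iSup_le fun z => ?_
          rw [inf_iSup_eq]
          refine iSup_le fun hz => ?_
          refine le_sup_of_le_right (le_iSup₂_of_le (x ⊓ z) ?_ ?_)
          · calc (x ⊓ z) ⊓ a = x ⊓ (z ⊓ a) := by rw [inf_assoc]
              _ ≤ x ⊓ x' := inf_le_inf_left _ hz
          · calc F x ⊓ (b a ⊓ F z) = b a ⊓ (F x ⊓ F z) :=
                inf_left_comm (F x) (b a) (F z)
              _ ≤ b a ⊓ F (x ⊓ z) := inf_le_inf_left _ (hFsub x z)
        · rw [iSup_inf_eq]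
          refine iSup_le fun z => ?_
          rw [iSup_inf_eq]
          refine iSup_le fun hz => ?_
          refine le_sup_of_le_right (le_iSup₂_of_le (z ⊓ x') ?_ ?_)
          · calc (z ⊓ x') ⊓ a = (z ⊓ a) ⊓ x' := by rw [inf_right_comm]
              _ ≤ x ⊓ x' := inf_le_inf_right _ hz
          · calc (b a ⊓ F z) ⊓ F x' = b a ⊓ (F z ⊓ F x') := by rw [inf_assoc]
              _ ≤ b a ⊓ F (z ⊓ x') := inf_le_inf_left _ (hFsub z x')
        · rw [iSup_inf_eq]
          refine iSup_le fun z => ?_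
          rw [iSup_inf_eq]
          refine iSup_le fun hz => ?_
          rw [inf_iSup_eq]
          refine iSup_le fun w => ?_
          rw [inf_iSup_eq]
          refine iSup_le fun hw => ?_
          refine le_sup_of_le_right (le_iSup₂_of_le (z ⊓ w) ?_ ?_)
          · exact le_inf ((inf_le_inf_right a inf_le_left).trans hz)
              ((inf_le_inf_right a inf_le_right).trans hw)
          · calc (b a ⊓ F z) ⊓ (b a ⊓ F w) ≤ b a ⊓ (F z ⊓ F w) :=
                le_inf (inf_le_left.trans inf_le_left)
                  (inf_le_inf inf_le_right inf_le_right)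
              _ ≤ b a ⊓ F (z ⊓ w) := inf_le_inf_left _ (hFsub z w)
      · intro x
        exact sup_le (hFP x) (iSup₂_le fun z hz => hbP z x hz)
    have hFF' : F ≤ F' := fun x => le_sup_left
    have hEq : F' ≤ F := hFmax hF'S hFF'
    have hstep : b a ⊓ F y₀ ≤ F' (y₀ ⊓ a) := by
      simp only [hF']
      exact le_sup_of_le_right (le_iSup₂_of_le y₀ le_rfl le_rfl)
    exact hstep.trans (hEq _)
  have hsubjoin : ∀ a c : L, F (a ⊔ c) ≤ F a ⊔ F c := by
    intro a c
    have h1 : b a ⊓ F (a ⊔ c) ≤ F a := by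
      have := key a (a ⊔ c)
      rwa [show (a ⊔ c) ⊓ a = a from inf_eq_right.2 le_sup_left] at this
    have h2 : b c ⊓ F (a ⊔ c) ≤ F c := by
      have := key c (a ⊔ c)
      rwa [show (a ⊔ c) ⊓ c = c from inf_eq_right.2 le_sup_right] at this
    have ble : ∀ u v w : B, u ⊓ v ≤ w → u ≤ vᶜ ⊔ w := by
      intro u v w h
      have heq : u = (u ⊓ v) ⊔ (u ⊓ vᶜ) := by
        rw [← inf_sup_left, sup_compl_eq_top, inf_top_eq]
      calc u = (u ⊓ v) ⊔ (u ⊓ vᶜ) := heq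
        _ ≤ vᶜ ⊔ w := sup_le (le_sup_of_le_right h) (le_sup_of_le_left inf_le_right)
    have hgen : ∀ u v : L, F (a ⊔ c) ≤
        ((F u)ᶜ ⊔ Pfun Ψ₁ (u ⊓ a)) ⊔ ((F v)ᶜ ⊔ Pfun Ψ₁ (v ⊓ c)) := by
      intro u v
      have hlat : (a ⊔ c) ⊓ (u ⊓ v) ≤ (u ⊓ a) ⊔ (v ⊓ c) := by
        rw [inf_comm, inf_sup_left]
        exact sup_le_sup (inf_le_inf_right a inf_le_left)
          (inf_le_inf_right c inf_le_right)
      have hkey : F (a ⊔ c) ⊓ (F u ⊓ F v) ≤ Pfun Ψ₁ (u ⊓ a) ⊔ Pfun Ψ₁ (v ⊓ c) := by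
        calc F (a ⊔ c) ⊓ (F u ⊓ F v) ≤ F (a ⊔ c) ⊓ F (u ⊓ v) :=
              inf_le_inf_left _ (hFsub u v)
          _ ≤ F ((a ⊔ c) ⊓ (u ⊓ v)) := hFsub _ _
          _ ≤ Pfun Ψ₁ ((a ⊔ c) ⊓ (u ⊓ v)) := hFP _
          _ ≤ Pfun Ψ₁ ((u ⊓ a) ⊔ (v ⊓ c)) := Pfun_mono Ψ₁ hlat
          _ ≤ Pfun Ψ₁ (u ⊓ a) ⊔ Pfun Ψ₁ (v ⊓ c) := Pfun_subjoin Ψ₁ _ _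
      have h := ble _ _ _ hkey
      rw [compl_inf] at h
      refine h.trans ?_
      refine sup_le (sup_le ?_ ?_) (sup_le ?_ ?_)
      · exact le_sup_of_le_left le_sup_left
      · exact le_sup_of_le_right le_sup_left
      · exact le_sup_of_le_left le_sup_right
      · exact le_sup_of_le_right le_sup_right
    have hbc : F (a ⊔ c) ≤ b a ⊔ b c := by
      simp only [hb]
      simp only [iInf_sup_eq, sup_iInf_eq]
      refine le_iInf fun y₁ => le_iInf fun y₂ => ?_
      first
      | exact hgen y₁ y₂
      | exact hgen y₂ y₁
    calc F (a ⊔ c) = (b a ⊔ b c) ⊓ F (a ⊔ c) := (inf_eq_right.2 hbc).symm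
      _ = (b a ⊓ F (a ⊔ c)) ⊔ (b c ⊓ F (a ⊔ c)) := by rw [inf_sup_right]
      _ ≤ F a ⊔ F c := sup_le_sup h1 h2
  refine ⟨F, ?_, ?_, ?_⟩
  · intro x y
    exact le_antisymm (hsubjoin x y)
      (sup_le (hFmono _ _ le_sup_left) (hFmono _ _ le_sup_right))
  · intro x y
    exact le_antisymm
      (le_inf (hFmono _ _ inf_le_left) (hFmono _ _ inf_le_right)) (hFsub x y)
  · intro x
    constructor
    · calc Ψ₂ x ≤ Φ₂ x := h21 x
        _ ≤ G0 x := le_iSup₂_of_le x le_rfl le_rfl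
        _ ≤ F x := hG0F x
    · exact (hFP x).trans (Pfun_le Ψ₁ x)
end

section
/- Let X and Y be distributive lattices, with Y conditionally complete and satisfying the dual to the infinite distributive law. Suppose maps f : X → Y and φ, ψ : X × X → Y satisfy: (1) φ(z,z) ≤ φ(x,y) whenever x ≤ z and y ≤ z; (2) ψ(x,y) ≤ ψ(z,z) whenever x ≤ z and y ≤ z; and (3) φ(x,y) ∧ f(x ∨ y) ≤ f(x) ∨ f(y) ≤ f(x ∨ y) ∨ ψ(x,y) for all x, y ∈ X. Then there exists a join homomorphism F : X → Y such that φ(x,x) ∧ f(x) ≤ F(x) ≤ f(x) ∨ ψ(x,x) for every x ∈ X. -/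
/-- Theorem 5 (stability with error functions): under the listed hypotheses there
exists a join homomorphism `F` with `φ(x,x) ⊓ f(x) ≤ F(x) ≤ f(x) ⊔ ψ(x,x)`. -/
theorem stability_error_functions {X Y : Type*} [DistribLattice X]
    [ConditionallyCompleteLattice Y]
    (hYdistrib : ∀ a b c : Y, a ⊓ (b ⊔ c) = (a ⊓ b) ⊔ (a ⊓ c))
    (hYdualinf : ∀ (y : Y) (S : Set Y), S.Nonempty → BddBelow S →
      y ⊔ sInf S = sInf ((fun s => y ⊔ s) '' S))
    (f : X → Y) (φ ψ : X × X → Y)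
    (hφ : ∀ x y z : X, x ≤ z → y ≤ z → φ (z, z) ≤ φ (x, y))
    (hψ : ∀ x y z : X, x ≤ z → y ≤ z → ψ (x, y) ≤ ψ (z, z))
    (hf₁ : ∀ x y : X, φ (x, y) ⊓ f (x ⊔ y) ≤ f x ⊔ f y)
    (hf₂ : ∀ x y : X, f x ⊔ f y ≤ f (x ⊔ y) ⊔ ψ (x, y)) :
    ∃ F : X → Y, (∀ x y, F (x ⊔ y) = F x ⊔ F y) ∧
      ∀ x, φ (x, x) ⊓ f x ≤ F x ∧ F x ≤ f x ⊔ ψ (x, x) := by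
  -- the "lower" approximation
  set h : X → Y := fun u => φ (u, u) ⊓ f u with hh
  -- each element of the defining set is bounded by `f x ⊔ ψ (x, x)`
  have hbound : ∀ x u : X, u ≤ x → h u ≤ f x ⊔ ψ (x, x) := by
    intro x u hu
    have h1 : f u ≤ f (u ⊔ x) ⊔ ψ (u, x) :=
      le_trans le_sup_left (hf₂ u x)
    have h2 : u ⊔ x = x := sup_eq_right.mpr hu
    have h3 : ψ (u, x) ≤ ψ (x, x) := hψ u x x hu le_rfl
    calc h u ≤ f u := inf_le_right
      _ ≤ f x ⊔ ψ (u, x) := by rwa [h2] at h1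
      _ ≤ f x ⊔ ψ (x, x) := sup_le_sup_left h3 _
  set F : X → Y := fun x => sSup (h '' {u | u ≤ x}) with hF
  have hne : ∀ x : X, (h '' {u | u ≤ x}).Nonempty := fun x =>
    ⟨h x, Set.mem_image_of_mem h (le_refl x)⟩
  have hbdd : ∀ x : X, BddAbove (h '' {u | u ≤ x}) := by
    intro x
    refine ⟨f x ⊔ ψ (x, x), ?_⟩
    rintro y ⟨u, hu, rfl⟩
    exact hbound x u hu
  -- subadditivity of h
  have hsub : ∀ a b : X, h (a ⊔ b) ≤ h a ⊔ h b := by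
    intro a b
    have hφa : φ (a ⊔ b, a ⊔ b) ≤ φ (a, a) := hφ a a (a ⊔ b) le_sup_left le_sup_left
    have hφb : φ (a ⊔ b, a ⊔ b) ≤ φ (b, b) := hφ b b (a ⊔ b) le_sup_right le_sup_right
    have hφab : φ (a ⊔ b, a ⊔ b) ≤ φ (a, b) := hφ a b (a ⊔ b) le_sup_left le_sup_right
    have h1 : h (a ⊔ b) ≤ f a ⊔ f b :=
      le_trans (inf_le_inf_right _ hφab) (hf₁ a b)
    have h2 : h (a ⊔ b) ≤ (φ (a, a) ⊓ φ (b, b)) ⊓ (f a ⊔ f b) :=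
      le_inf (le_inf (le_trans inf_le_left hφa) (le_trans inf_le_left hφb)) h1
    calc h (a ⊔ b) ≤ (φ (a, a) ⊓ φ (b, b)) ⊓ (f a ⊔ f b) := h2
      _ = ((φ (a, a) ⊓ φ (b, b)) ⊓ f a) ⊔ ((φ (a, a) ⊓ φ (b, b)) ⊓ f b) :=
          hYdistrib _ _ _
      _ ≤ h a ⊔ h b := by
          gcongr
          · exact inf_le_inf_right _ inf_le_left
          · exact inf_le_inf_right _ inf_le_right
  have hmem : ∀ x u : X, u ≤ x → h u ≤ F x := by
    intro x u hu
    exact le_csSup (hbdd x) (Set.mem_image_of_mem h hu)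
  have hmono : ∀ x y : X, x ≤ y → F x ≤ F y := by
    intro x y hxy
    refine csSup_le (hne x) ?_
    rintro z ⟨u, hu, rfl⟩
    exact hmem y u (le_trans hu hxy)
  refine ⟨F, ?_, ?_⟩
  · intro x y
    apply le_antisymm
    · refine csSup_le (hne _) ?_
      rintro z ⟨w, hw, rfl⟩
      have hdecomp : w = (w ⊓ x) ⊔ (w ⊓ y) := by
        rw [← inf_sup_left, inf_eq_left.mpr hw]
      calc h w = h ((w ⊓ x) ⊔ (w ⊓ y)) := by rw [← hdecomp]
        _ ≤ h (w ⊓ x) ⊔ h (w ⊓ y) := hsub _ _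
        _ ≤ F x ⊔ F y := sup_le_sup (hmem x _ inf_le_right) (hmem y _ inf_le_right)
    · exact sup_le (hmono x (x ⊔ y) le_sup_left) (hmono y (x ⊔ y) le_sup_right)
  · intro x
    constructor
    · exact hmem x x le_rfl
    · refine csSup_le (hne x) ?_
      rintro z ⟨u, hu, rfl⟩
      exact hbound x u hu
end

section
/- Let X and Y be distributive lattices, with Y conditionally complete and satisfying the dual to the infinite distributive law. Let N : Y → 2^Y be a function each of whose values is a nonempty bounded set, satisfying: (i) y ∈ N(y) for each y ∈ Y; (ii) if t, u ∈ N(z) and t ≤ y ≤ u, then y ∈ N(z); (iii) sup N(y) ∈ N(y) and inf N(y) ∈ N(y) for each y ∈ Y; (iv) if t ∈ N(u) and u ∨ y ∈ N(z), then t ∨ y ∈ N(z). Then for every map f : X → Y satisfying f(x) ∨ f(y) ∈ N(f(x ∨ y)) for all x, y ∈ X, there exists a join homomorphism F : X → Y such that F(x) ∈ N(f(x)) for every x ∈ X. -/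
/-- Theorem 6 (stability via lattice neighborhoods): for `f` with
`f(x) ⊔ f(y) ∈ N(f(x ⊔ y))` there is a join homomorphism `F` with `F(x) ∈ N(f(x))`. -/
theorem stability_neighborhoods {X Y : Type*} [DistribLattice X]
    [ConditionallyCompleteLattice Y]
    (hYdistrib : ∀ a b c : Y, a ⊓ (b ⊔ c) = (a ⊓ b) ⊔ (a ⊓ c))
    (hYdualinf : ∀ (y : Y) (S : Set Y), S.Nonempty → BddBelow S →
      y ⊔ sInf S = sInf ((fun s => y ⊔ s) '' S))
    (N : Y → Set Y)
    (hNne : ∀ y, (N y).Nonempty)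
    (hNbdd : ∀ y, BddAbove (N y) ∧ BddBelow (N y))
    (hN1 : ∀ y, y ∈ N y)
    (hN2 : ∀ z t u y : Y, t ∈ N z → u ∈ N z → t ≤ y → y ≤ u → y ∈ N z)
    (hN3 : ∀ y, sSup (N y) ∈ N y ∧ sInf (N y) ∈ N y)
    (hN4 : ∀ t u y z : Y, t ∈ N u → u ⊔ y ∈ N z → t ⊔ y ∈ N z)
    (f : X → Y) (hf : ∀ x y : X, f x ⊔ f y ∈ N (f (x ⊔ y))) :
    ∃ F : X → Y, (∀ x y, F (x ⊔ y) = F x ⊔ F y) ∧ ∀ x, F x ∈ N (f x) := by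
  classical
  set m : X → Y := fun x => sInf (N (f x)) with hm
  have key : ∀ a b : X, m a ⊔ m b ∈ N (f (a ⊔ b)) := by
    intro a b
    have h1 := hf a b
    have h2 := hN4 (sInf (N (f a))) (f a) (f b) (f (a ⊔ b)) (hN3 (f a)).2 h1
    rw [sup_comm (sInf (N (f a))) (f b)] at h2
    have h3 := hN4 (sInf (N (f b))) (f b) (sInf (N (f a))) (f (a ⊔ b)) (hN3 (f b)).2 h2
    rw [sup_comm (sInf (N (f b))) (sInf (N (f a)))] at h3
    exact h3
  have hub : ∀ x : X, ∀ z, z ≤ x → m z ≤ sSup (N (f x)) := by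
    intro x z hz
    have hmem : m z ⊔ m x ∈ N (f x) := by
      have h := key z x
      rwa [sup_eq_right.mpr hz] at h
    calc m z ≤ m z ⊔ m x := le_sup_left
      _ ≤ sSup (N (f x)) := le_csSup (hNbdd (f x)).1 hmem
  set S : X → Set Y := fun x => m '' {z | z ≤ x} with hS
  have hSne : ∀ x, (S x).Nonempty := fun x => ⟨m x, ⟨x, le_refl x, rfl⟩⟩
  have hSbdd : ∀ x, BddAbove (S x) := by
    intro x
    refine ⟨sSup (N (f x)), ?_⟩
    rintro _ ⟨z, hz, rfl⟩
    exact hub x z hz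
  refine ⟨fun x => sSup (S x), ?_, ?_⟩
  · intro x y
    apply le_antisymm
    · apply csSup_le (hSne _)
      rintro _ ⟨z, hz, rfl⟩
      have hz' : (z ⊓ x) ⊔ (z ⊓ y) = z := by
        rw [← inf_sup_left]; exact inf_eq_left.mpr hz
      have hmem : m (z ⊓ x) ⊔ m (z ⊓ y) ∈ N (f z) := by
        have h := key (z ⊓ x) (z ⊓ y)
        rwa [hz'] at h
      have h1 : m z ≤ m (z ⊓ x) ⊔ m (z ⊓ y) := csInf_le (hNbdd (f z)).2 hmem
      have h2 : m (z ⊓ x) ≤ sSup (S x) := le_csSup (hSbdd x) ⟨_, inf_le_right, rfl⟩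
      have h3 : m (z ⊓ y) ≤ sSup (S y) := le_csSup (hSbdd y) ⟨_, inf_le_right, rfl⟩
      exact h1.trans (sup_le_sup h2 h3)
    · apply sup_le
      · exact csSup_le_csSup (hSbdd _) (hSne _)
          (by rintro _ ⟨z, hz, rfl⟩; exact ⟨z, hz.trans le_sup_left, rfl⟩)
      · exact csSup_le_csSup (hSbdd _) (hSne _)
          (by rintro _ ⟨z, hz, rfl⟩; exact ⟨z, hz.trans le_sup_right, rfl⟩)
  · intro x
    have hlo : m x ≤ sSup (S x) := le_csSup (hSbdd x) ⟨x, le_refl x, rfl⟩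
    have hhi : sSup (S x) ≤ sSup (N (f x)) := csSup_le (hSne x)
      (by rintro _ ⟨z, hz, rfl⟩; exact hub x z hz)
    exact hN2 (f x) (m x) (sSup (N (f x))) _ (hN3 (f x)).2 (hN3 (f x)).1 hlo hhi
end

section
/- Let D ⊆ ℝ, ε ≥ 0, and let f : D → ℝ satisfy max{f(x), f(y)} − f(max{x, y}) ≤ ε for all x, y ∈ D. Then there exists an increasing (monotone nondecreasing) function g : D → ℝ such that |f(x) − g(x)| ≤ ε/2 for every x ∈ D. -/
/-- Corollary: stability of approximately increasing functions. -/
theorem approx_increasing_stability (D : Set ℝ) (ε : ℝ) (hε : 0 ≤ ε)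
    (f : D → ℝ)
    (hf : ∀ x y : D, max (f x) (f y) - f (max x y) ≤ ε) :
    ∃ g : D → ℝ, Monotone g ∧ ∀ x : D, |f x - g x| ≤ ε / 2 := by
  -- key: for y ≤ x, f y ≤ f x + ε
  have key : ∀ x y : D, y ≤ x → f y ≤ f x + ε := by
    intro x y hyx
    have h := hf y x
    have hm : max y x = x := max_eq_right hyx
    rw [hm] at h
    have : f y ≤ max (f y) (f x) := le_max_left _ _
    linarith
  set S : D → Set ℝ := fun x => f '' {y : D | y ≤ x} with hS
  have hne : ∀ x : D, (S x).Nonempty := fun x => ⟨f x, x, le_refl x, rfl⟩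
  have hbdd : ∀ x : D, BddAbove (S x) := by
    intro x
    refine ⟨f x + ε, ?_⟩
    rintro _ ⟨y, hy, rfl⟩
    exact key x y hy
  have hsub : ∀ x : D, f x ≤ sSup (S x) :=
    fun x => le_csSup (hbdd x) ⟨x, le_refl x, rfl⟩
  have hsup : ∀ x : D, sSup (S x) ≤ f x + ε := by
    intro x
    apply csSup_le (hne x)
    rintro _ ⟨y, hy, rfl⟩
    exact key x y hy
  refine ⟨fun x => sSup (S x) - ε / 2, ?_, ?_⟩
  · intro a b hab
    have hmono : S a ⊆ S b := by
      rintro _ ⟨y, hy, rfl⟩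
      exact ⟨y, le_trans hy hab, rfl⟩
    have := csSup_le_csSup (hbdd b) (hne a) hmono
    simpa using sub_le_sub_right this (ε / 2)
  · intro x
    rw [abs_le]
    constructor <;> [linarith [hsup x]; linarith [hsub x]]
end

section
/- Let D ⊆ ℝ, ε ≥ 0, and let f : D → ℝ satisfy f(max{x, y}) − min{f(x), f(y)} ≤ ε for all x, y ∈ D. Then there exists a decreasing (monotone nonincreasing) function g : D → ℝ such that |f(x) − g(x)| ≤ ε/2 for every x ∈ D. -/
/-- Corollary: stability of approximately decreasing functions. -/
theorem approx_decreasing_stability (D : Set ℝ) (ε : ℝ) (hε : 0 ≤ ε)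
    (f : D → ℝ)
    (hf : ∀ x y : D, f (max x y) - min (f x) (f y) ≤ ε) :
    ∃ g : D → ℝ, Antitone g ∧ ∀ x : D, |f x - g x| ≤ ε / 2 := by
  have key : ∀ x y : D, x ≤ y → f y ≤ f x + ε := by
    intro x y hxy
    have h := hf x y
    rw [max_eq_right hxy] at h
    have : min (f x) (f y) ≤ f x := min_le_left _ _
    linarith
  set S : D → Set ℝ := fun x => f '' {y : D | x ≤ y} with hS
  have hne : ∀ x : D, (S x).Nonempty := fun x => ⟨f x, x, le_refl x, rfl⟩
  have hbdd : ∀ x : D, BddAbove (S x) := by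
    intro x
    refine ⟨f x + ε, ?_⟩
    rintro _ ⟨y, hy, rfl⟩
    exact key x y hy
  refine ⟨fun x => sSup (S x) - ε / 2, ?_, ?_⟩
  · intro x y hxy
    have hsub : S y ⊆ S x := by
      rintro _ ⟨z, hz, rfl⟩
      exact ⟨z, le_trans hxy hz, rfl⟩
    have := csSup_le_csSup (hbdd x) (hne y) hsub
    linarith
  · intro x
    have h1 : f x ≤ sSup (S x) := le_csSup (hbdd x) ⟨x, le_refl x, rfl⟩
    have h2 : sSup (S x) ≤ f x + ε := csSup_le (hne x) (by rintro _ ⟨y, hy, rfl⟩; exact key x y hy)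
    rw [abs_le]
    constructor <;> linarith
end

section
/- Let I ⊆ ℝ be an interval and ε ≥ 0. Assume f : I → ℝ satisfies min{f(x), f(y)} − ε ≤ f(tx + (1−t)y) ≤ max{f(x), f(y)} + ε for all x, y ∈ I and t ∈ [0,1]. Then there exists a monotone function g : I → ℝ (either nondecreasing or nonincreasing on I) such that |f(x) − g(x)| ≤ ε/2 for every x ∈ I. -/
/-- Theorem (Förg-Rob, Nikodem, Páles): stability of approximately monotone
functions on an interval. -/
theorem approx_monotone_stability (I : Set ℝ) (hI : Convex ℝ I)
    (ε : ℝ) (hε : 0 ≤ ε) (f : ℝ → ℝ)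
    (hf : ∀ x ∈ I, ∀ y ∈ I, ∀ t ∈ Set.Icc (0 : ℝ) 1,
      min (f x) (f y) - ε ≤ f (t * x + (1 - t) * y) ∧
      f (t * x + (1 - t) * y) ≤ max (f x) (f y) + ε) :
    ∃ g : ℝ → ℝ, (MonotoneOn g I ∨ AntitoneOn g I) ∧
      ∀ x ∈ I, |f x - g x| ≤ ε / 2 := by
  -- Key betweenness lemma
  have key : ∀ x ∈ I, ∀ y ∈ I, ∀ z : ℝ, x ≤ z → z ≤ y →
      min (f x) (f y) - ε ≤ f z ∧ f z ≤ max (f x) (f y) + ε := by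
    intro x hx y hy z hxz hzy
    rcases eq_or_lt_of_le (hxz.trans hzy) with h | h
    · have hzx : z = x := le_antisymm (h ▸ hzy) hxz
      subst hzx
      constructor
      · have := min_le_left (f z) (f y); linarith
      · have := le_max_left (f z) (f y); linarith
    · have hyx : 0 < y - x := by linarith
      have ht0 : 0 ≤ (y - z) / (y - x) := div_nonneg (by linarith) hyx.le
      have ht1 : (y - z) / (y - x) ≤ 1 := by rw [div_le_one hyx]; linarith
      have hz : (y - z) / (y - x) * x + (1 - (y - z) / (y - x)) * y = z := by
        field_simp
        ring
      have := hf x hx y hy ((y - z) / (y - x)) ⟨ht0, ht1⟩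
      rwa [hz] at this
  by_cases hA : ∀ a ∈ I, ∀ b ∈ I, a ≤ b → f a ≤ f b + ε
  · -- no big decrease: nondecreasing approximation
    refine ⟨fun x => sSup (f '' (I ∩ Set.Iic x)) - ε / 2, Or.inl ?_, ?_⟩
    · intro x hx y hy hxy
      have hbdd : BddAbove (f '' (I ∩ Set.Iic y)) := by
        refine ⟨f y + ε, ?_⟩
        rintro _ ⟨a, ⟨haI, hay⟩, rfl⟩
        exact hA a haI y hy hay
      have hne : (f '' (I ∩ Set.Iic x)).Nonempty :=
        ⟨f x, ⟨x, ⟨hx, le_refl x⟩, rfl⟩⟩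
      have : sSup (f '' (I ∩ Set.Iic x)) ≤ sSup (f '' (I ∩ Set.Iic y)) := by
        apply csSup_le_csSup hbdd hne
        apply Set.image_mono
        exact Set.inter_subset_inter_right _ (Set.Iic_subset_Iic.mpr hxy)
      simpa using sub_le_sub_right this (ε / 2)
    · intro x hx
      have hbdd : BddAbove (f '' (I ∩ Set.Iic x)) := by
        refine ⟨f x + ε, ?_⟩
        rintro _ ⟨a, ⟨haI, hax⟩, rfl⟩
        exact hA a haI x hx hax
      have h1 : f x ≤ sSup (f '' (I ∩ Set.Iic x)) := by
        apply le_csSup hbdd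
        exact ⟨x, ⟨hx, le_refl x⟩, rfl⟩
      have h2 : sSup (f '' (I ∩ Set.Iic x)) ≤ f x + ε := by
        have hne : (f '' (I ∩ Set.Iic x)).Nonempty := ⟨f x, x, ⟨hx, le_refl x⟩, rfl⟩
        apply csSup_le hne
        rintro _ ⟨a, ⟨haI, hax⟩, rfl⟩
        exact hA a haI x hx hax
      rw [abs_le]
      constructor <;> simp <;> linarith
  · -- there is a big decrease; show there can be no big increase
    push_neg at hA
    obtain ⟨a, haI, b, hbI, hab, hdrop⟩ := hA
    have hB : ∀ c ∈ I, ∀ d ∈ I, c ≤ d → f d ≤ f c + ε := by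
      by_contra hB
      push_neg at hB
      obtain ⟨c, hcI, d, hdI, hcd, hrise⟩ := hB
      -- hdrop : f b + ε < f a, hrise : f c + ε < f d
      have h1 : f a ≤ f c + ε := by
        rcases le_total a c with h | h
        · have := (key a haI d hdI c h hcd).1
          rcases min_cases (f a) (f d) with ⟨he, _⟩ | ⟨he, _⟩ <;> rw [he] at this <;> linarith
        · have := (key c hcI b hbI a h hab).2
          rcases max_cases (f c) (f b) with ⟨he, _⟩ | ⟨he, _⟩ <;> rw [he] at this <;> linarith
      have h2 : f d ≤ f b + ε := by
        rcases le_total d b with h | h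
        · have := (key c hcI b hbI d hcd h).2
          rcases max_cases (f c) (f b) with ⟨he, _⟩ | ⟨he, _⟩ <;> rw [he] at this <;> linarith
        · have := (key a haI d hdI b hab h).1
          rcases min_cases (f a) (f d) with ⟨he, _⟩ | ⟨he, _⟩ <;> rw [he] at this <;> linarith
      linarith
    -- no big increase: nonincreasing approximation
    refine ⟨fun x => sSup (f '' (I ∩ Set.Ici x)) - ε / 2, Or.inr ?_, ?_⟩
    · intro x hx y hy hxy
      have hbdd : BddAbove (f '' (I ∩ Set.Ici x)) := by
        refine ⟨f x + ε, ?_⟩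
        rintro _ ⟨e, ⟨heI, hex⟩, rfl⟩
        exact hB x hx e heI hex
      have hne : (f '' (I ∩ Set.Ici y)).Nonempty :=
        ⟨f y, ⟨y, ⟨hy, le_refl y⟩, rfl⟩⟩
      have : sSup (f '' (I ∩ Set.Ici y)) ≤ sSup (f '' (I ∩ Set.Ici x)) := by
        apply csSup_le_csSup hbdd hne
        apply Set.image_mono
        exact Set.inter_subset_inter_right _ (Set.Ici_subset_Ici.mpr hxy)
      simpa using sub_le_sub_right this (ε / 2)
    · intro x hx
      have hbdd : BddAbove (f '' (I ∩ Set.Ici x)) := by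
        refine ⟨f x + ε, ?_⟩
        rintro _ ⟨e, ⟨heI, hex⟩, rfl⟩
        exact hB x hx e heI hex
      have h1 : f x ≤ sSup (f '' (I ∩ Set.Ici x)) := by
        apply le_csSup hbdd
        exact ⟨x, ⟨hx, le_refl x⟩, rfl⟩
      have h2 : sSup (f '' (I ∩ Set.Ici x)) ≤ f x + ε := by
        have hne : (f '' (I ∩ Set.Ici x)).Nonempty := ⟨f x, x, ⟨hx, le_refl x⟩, rfl⟩
        apply csSup_le hne
        rintro _ ⟨e, ⟨heI, hex⟩, rfl⟩
        exact hB x hx e heI hex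
      rw [abs_le]
      constructor <;> simp <;> linarith
end

section
/- Let X and Y be distributive lattices, with Y conditionally complete. Suppose maps f : X → Y and φ, ψ : X × X → Y satisfy: (1) φ(z,z) ≤ φ(x,y) whenever x ≤ z and y ≤ z; (2) ψ(x,y) ≤ ψ(z,z) whenever x ≤ z and y ≤ z; and (3) φ(x,y) ∧ f(x ∨ y) ≤ f(x) ∨ f(y) ≤ f(x ∨ y) ∨ ψ(x,y) for all x, y ∈ X. Then for every n ≥ 1 and all x₁, …, xₙ ∈ X, writing x = x₁ ∨ … ∨ xₙ, we have φ(x,x) ∧ f(x) ≤ f(x₁) ∨ … ∨ f(xₙ) ≤ f(x) ∨ ψ(x,x). -/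
lemma sup'_univ_castSucc_aux {α : Type*} [SemilatticeSup α] {n : ℕ} (g : Fin (n + 2) → α) :
    Finset.univ.sup' Finset.univ_nonempty g =
    Finset.univ.sup' Finset.univ_nonempty (fun i : Fin (n + 1) => g i.castSucc) ⊔
      g (Fin.last (n + 1)) := by
  apply le_antisymm
  · rw [Finset.sup'_le_iff]
    intro i _
    induction i using Fin.lastCases with
    | last => exact le_sup_right
    | cast i => exact le_sup_of_le_left (Finset.le_sup' (fun i : Fin (n+1) => g i.castSucc) (Finset.mem_univ i))
  · apply sup_le
    · rw [Finset.sup'_le_iff]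
      intro i _
      exact Finset.le_sup' _ (Finset.mem_univ i.castSucc)
    · exact Finset.le_sup' _ (Finset.mem_univ _)

/-- Inequality (3) of the paper: the finite-join estimate, proved by induction. -/
theorem finite_join_estimate {X Y : Type*} [DistribLattice X]
    [ConditionallyCompleteLattice Y]
    (hYdistrib : ∀ a b c : Y, a ⊓ (b ⊔ c) = (a ⊓ b) ⊔ (a ⊓ c))
    (f : X → Y) (φ ψ : X × X → Y)
    (hφ : ∀ x y z : X, x ≤ z → y ≤ z → φ (z, z) ≤ φ (x, y))
    (hψ : ∀ x y z : X, x ≤ z → y ≤ z → ψ (x, y) ≤ ψ (z, z))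
    (hf₁ : ∀ x y : X, φ (x, y) ⊓ f (x ⊔ y) ≤ f x ⊔ f y)
    (hf₂ : ∀ x y : X, f x ⊔ f y ≤ f (x ⊔ y) ⊔ ψ (x, y)) :
    ∀ (n : ℕ) (xs : Fin (n + 1) → X) (x : X),
      x = Finset.univ.sup' Finset.univ_nonempty xs →
      φ (x, x) ⊓ f x ≤ Finset.univ.sup' Finset.univ_nonempty (fun i => f (xs i)) ∧
      Finset.univ.sup' Finset.univ_nonempty (fun i => f (xs i)) ≤ f x ⊔ ψ (x, x) := by
  intro n
  induction n with
  | zero =>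
    intro xs x hx
    have : x = xs 0 := by
      rw [hx]
      simp [Finset.sup'_eq_sup]
    subst this
    constructor
    · calc φ (xs 0, xs 0) ⊓ f (xs 0) ≤ f (xs 0) := inf_le_right
        _ ≤ _ := Finset.le_sup' (fun i => f (xs i)) (Finset.mem_univ 0)
    · rw [Finset.sup'_le_iff]
      intro i _
      fin_cases i
      exact le_sup_left
  | succ n ih =>
    intro xs x hx
    set ys : Fin (n + 1) → X := fun i => xs i.castSucc with hys
    set y : X := Finset.univ.sup' Finset.univ_nonempty ys with hy
    obtain ⟨ih₁, ih₂⟩ := ih ys y rfl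
    set z : X := xs (Fin.last (n + 1)) with hz
    have hxyz : x = y ⊔ z := by
      rw [hx, sup'_univ_castSucc_aux xs]
    have hyx : y ≤ x := hxyz ▸ le_sup_left
    have hzx : z ≤ x := hxyz ▸ le_sup_right
    have hsplit : Finset.univ.sup' Finset.univ_nonempty (fun i => f (xs i)) =
        Finset.univ.sup' Finset.univ_nonempty (fun i => f (ys i)) ⊔ f z := by
      exact sup'_univ_castSucc_aux (fun i => f (xs i))
    constructor
    · have h1 : φ (x, x) ⊓ f x ≤ f y ⊔ f z := by
        calc φ (x, x) ⊓ f x ≤ φ (y, z) ⊓ f (y ⊔ z) :=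
              inf_le_inf (hφ y z x hyx hzx) (le_of_eq (by rw [hxyz]))
          _ ≤ f y ⊔ f z := hf₁ y z
      have h2 : φ (x, x) ⊓ f x ≤ (φ (x, x) ⊓ f y) ⊔ (φ (x, x) ⊓ f z) := by
        rw [← hYdistrib]
        exact le_inf inf_le_left h1
      rw [hsplit]
      refine h2.trans (sup_le_sup ?_ inf_le_right)
      calc φ (x, x) ⊓ f y ≤ φ (y, y) ⊓ f y := inf_le_inf_right _ (hφ y y x hyx hyx)
        _ ≤ _ := ih₁
    · rw [hsplit]
      calc Finset.univ.sup' Finset.univ_nonempty (fun i => f (ys i)) ⊔ f z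
          ≤ (f y ⊔ ψ (y, y)) ⊔ f z := sup_le_sup_right ih₂ _
        _ = (f y ⊔ f z) ⊔ ψ (y, y) := by ac_rfl
        _ ≤ (f (y ⊔ z) ⊔ ψ (y, z)) ⊔ ψ (x, x) :=
            sup_le_sup (hf₂ y z) (hψ y y x hyx hyx)
        _ ≤ f x ⊔ ψ (x, x) := by
            rw [← hxyz]
            exact sup_le (sup_le le_sup_left (le_sup_right.trans' (hψ y z x hyx hzx)))
              le_sup_right
end

section
/- Let X and Y be distributive lattices, with Y conditionally complete and satisfying the dual to the infinite distributive law. Suppose maps f : X → Y and φ, ψ : X × X → Y satisfy: (1) φ(z,z) ≤ φ(x,y) whenever x ≤ z and y ≤ z; (2) ψ(x,y) ≤ ψ(z,z) whenever x ≤ z and y ≤ z; and (3) φ(x,y) ∧ f(x ∨ y) ≤ f(x) ∨ f(y) ≤ f(x ∨ y) ∨ ψ(x,y) for all x, y ∈ X. Define Φ(x) = inf { f(x₁) ∨ … ∨ f(xₙ) : n ∈ ℕ, x₁, …, xₙ ∈ X, x = x₁ ∨ … ∨ xₙ }. Then Φ(x ∨ y) ≤ Φ(x) ∨ Φ(y)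 for all x, y ∈ X. -/
/-- Auxiliary: the sup over `Fin (n+1+m+1)` of a glued tuple splits. -/
lemma sup'_univ_glue {α : Type*} [SemilatticeSup α] {n m : ℕ}
    (g₁ : Fin (n + 1) → α) (g₂ : Fin (m + 1) → α) :
    Finset.univ.sup' Finset.univ_nonempty
      (fun i : Fin (n + 1 + m + 1) =>
        if h : (i : ℕ) < n + 1 then g₁ ⟨i, h⟩
        else g₂ ⟨(i : ℕ) - (n + 1), by omega⟩) =
      Finset.univ.sup' Finset.univ_nonempty g₁ ⊔
        Finset.univ.sup' Finset.univ_nonempty g₂ := by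
  apply le_antisymm
  · apply Finset.sup'_le
    intro i _
    by_cases h : (i : ℕ) < n + 1
    · rw [dif_pos h]
      exact le_sup_of_le_left (Finset.le_sup' _ (Finset.mem_univ _))
    · rw [dif_neg h]
      exact le_sup_of_le_right (Finset.le_sup' _ (Finset.mem_univ _))
  · apply sup_le
    · apply Finset.sup'_le
      intro j _
      refine le_trans ?_ (Finset.le_sup' _
        (Finset.mem_univ (⟨(j : ℕ), by omega⟩ : Fin (n + 1 + m + 1))))
      simp only
      rw [dif_pos (show ((⟨(j : ℕ), by omega⟩ : Fin (n + 1 + m + 1)) : ℕ) < n + 1 from j.isLt)]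
    · apply Finset.sup'_le
      intro j _
      refine le_trans ?_ (Finset.le_sup' _
        (Finset.mem_univ (⟨n + 1 + (j : ℕ), by omega⟩ : Fin (n + 1 + m + 1))))
      simp only
      rw [dif_neg (show ¬ ((⟨n + 1 + (j : ℕ), by omega⟩ : Fin (n + 1 + m + 1)) : ℕ) < n + 1
        by simp; omega)]
      apply le_of_eq
      congr 1
      apply Fin.ext
      simp

/-- Subadditivity (inequality (sub)) of the function `Φ` from the proof of Theorem 5. -/
theorem Phi_subadditive {X Y : Type*} [DistribLattice X]
    [ConditionallyCompleteLattice Y]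
    (hYdistrib : ∀ a b c : Y, a ⊓ (b ⊔ c) = (a ⊓ b) ⊔ (a ⊓ c))
    (hYdualinf : ∀ (y : Y) (S : Set Y), S.Nonempty → BddBelow S →
      y ⊔ sInf S = sInf ((fun s => y ⊔ s) '' S))
    (f : X → Y) (φ ψ : X × X → Y)
    (hφ : ∀ x y z : X, x ≤ z → y ≤ z → φ (z, z) ≤ φ (x, y))
    (hψ : ∀ x y z : X, x ≤ z → y ≤ z → ψ (x, y) ≤ ψ (z, z))
    (hf₁ : ∀ x y : X, φ (x, y) ⊓ f (x ⊔ y) ≤ f x ⊔ f y)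
    (hf₂ : ∀ x y : X, f x ⊔ f y ≤ f (x ⊔ y) ⊔ ψ (x, y))
    (Φ : X → Y)
    (hΦ : ∀ x : X, Φ x = sInf {y : Y | ∃ (n : ℕ) (xs : Fin (n + 1) → X),
      x = Finset.univ.sup' Finset.univ_nonempty xs ∧
      y = Finset.univ.sup' Finset.univ_nonempty (fun i => f (xs i))}) :
    ∀ x y : X, Φ (x ⊔ y) ≤ Φ x ⊔ Φ y := by
  set S : X → Set Y := fun x => {y : Y | ∃ (n : ℕ) (xs : Fin (n + 1) → X),
      x = Finset.univ.sup' Finset.univ_nonempty xs ∧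
      y = Finset.univ.sup' Finset.univ_nonempty (fun i => f (xs i))} with hS
  -- key lemma: lower bound for elements of S x
  have key : ∀ (x : X) (ι : Type) (s : Finset ι) (hs : s.Nonempty) (g : ι → X),
      (∀ i ∈ s, g i ≤ x) →
      φ (x, x) ⊓ f (s.sup' hs g) ≤ s.sup' hs (fun i => f (g i)) := by
    intro x ι s hs g
    induction hs using Finset.Nonempty.cons_induction with
    | singleton a =>
      intro _
      simp only [Finset.sup'_singleton]
      exact inf_le_right
    | cons a s ha hs IH =>
      intro hle
      have hgax : g a ≤ x := hle a (Finset.mem_cons_self a s)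
      have hsx : s.sup' hs g ≤ x :=
        Finset.sup'_le _ _ fun i hi => hle i (Finset.mem_cons_of_mem hi)
      rw [Finset.sup'_cons (H := hs), Finset.sup'_cons (H := hs)]
      have h1 : φ (x, x) ⊓ f (g a ⊔ s.sup' hs g) ≤
          φ (x, x) ⊓ (f (g a) ⊔ f (s.sup' hs g)) := by
        refine le_inf inf_le_left ?_
        calc φ (x, x) ⊓ f (g a ⊔ s.sup' hs g)
            ≤ φ (g a, s.sup' hs g) ⊓ f (g a ⊔ s.sup' hs g) :=
              inf_le_inf_right _ (hφ _ _ _ hgax hsx)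
          _ ≤ f (g a) ⊔ f (s.sup' hs g) := hf₁ _ _
      calc φ (x, x) ⊓ f (g a ⊔ s.sup' hs g)
          ≤ φ (x, x) ⊓ (f (g a) ⊔ f (s.sup' hs g)) := h1
        _ = (φ (x, x) ⊓ f (g a)) ⊔ (φ (x, x) ⊓ f (s.sup' hs g)) := hYdistrib _ _ _
        _ ≤ f (g a) ⊔ s.sup' hs (fun i => f (g i)) :=
            sup_le_sup inf_le_right
              (IH (fun i hi => hle i (Finset.mem_cons_of_mem hi)))
  -- nonemptiness of S x
  have hne : ∀ x : X, (S x).Nonempty := by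
    intro x
    exact ⟨f x, 0, fun _ => x, (Finset.sup'_const _ x).symm,
      (Finset.sup'_const _ (f x)).symm⟩
  -- boundedness below of S x
  have hbdd : ∀ x : X, BddBelow (S x) := by
    intro x
    refine ⟨φ (x, x) ⊓ f x, ?_⟩
    rintro y ⟨n, xs, hx, hy⟩
    have h := key x (Fin (n + 1)) Finset.univ Finset.univ_nonempty xs
      (fun i _ => by rw [hx]; exact Finset.le_sup' _ (Finset.mem_univ i))
    rw [← hx] at h
    rw [hy]
    exact h
  -- concatenation: if a ∈ S x and b ∈ S y then a ⊔ b ∈ S (x ⊔ y)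
  have hcat : ∀ (x y : X) (a b : Y), a ∈ S x → b ∈ S y → a ⊔ b ∈ S (x ⊔ y) := by
    rintro x y a b ⟨n, xs, hx, ha⟩ ⟨m, ys, hy, hb⟩
    refine ⟨n + 1 + m, fun i : Fin (n + 1 + m + 1) =>
        if h : (i : ℕ) < n + 1 then xs ⟨i, h⟩
        else ys ⟨(i : ℕ) - (n + 1), by omega⟩, ?_, ?_⟩
    · rw [hx, hy]
      exact (sup'_univ_glue xs ys).symm
    · rw [ha, hb]
      refine ((sup'_univ_glue (fun j => f (xs j)) (fun j => f (ys j))).symm).trans ?_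
      congr 1
      funext i
      exact (apply_dite f _ _ _).symm
  -- main argument
  intro x y
  have hmain : ∀ a ∈ S x, ∀ b ∈ S y, Φ (x ⊔ y) ≤ a ⊔ b := by
    intro a ha b hb
    rw [hΦ]
    exact csInf_le (hbdd (x ⊔ y)) (hcat x y a b ha hb)
  rw [hΦ x, hΦ y]
  rw [hYdualinf (sInf (S x)) (S y) (hne y) (hbdd y)]
  apply le_csInf ((hne y).image _)
  rintro _ ⟨b, hb, rfl⟩
  show Φ (x ⊔ y) ≤ sInf (S x) ⊔ b
  rw [sup_comm (sInf (S x)) b, hYdualinf b (S x) (hne x) (hbdd x)]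
  apply le_csInf ((hne x).image _)
  rintro _ ⟨a, ha, rfl⟩
  show Φ (x ⊔ y) ≤ b ⊔ a
  rw [sup_comm b a]
  exact hmain a ha b hb
end

section
/- Let X and Y be distributive lattices, with Y conditionally complete and satisfying the dual to the infinite distributive law. Let N : Y → 2^Y be a function each of whose values is a nonempty bounded set, satisfying: (i) y ∈ N(y); (ii) if t, u ∈ N(z) and t ≤ y ≤ u, then y ∈ N(z); (iii) sup N(y) ∈ N(y) and inf N(y) ∈ N(y); (iv) if t ∈ N(u) and u ∨ y ∈ N(z), then t ∨ y ∈ N(z). Suppose f : X → Y satisfies f(x) ∨ f(y) ∈ N(f(x ∨ y)) for all x, y ∈ X. Define Φ(x) = inf { f(x₁) ∨ … ∨ f(xₙ) : n ∈ ℕ, x₁, …, xₙ ∈ X, x = x₁ ∨ … ∨ xₙ } and Ψ(x) = sup of the same set. Then Φ(x) ∈ N(f(x)) and Ψ(x) ∈ N(f(x)) for every x ∈ X. -/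
lemma sup'_fin_split {α : Type*} [SemilatticeSup α] (n : ℕ) (g : Fin (n + 2) → α) :
    Finset.univ.sup' Finset.univ_nonempty g =
      (Finset.univ.sup' Finset.univ_nonempty (fun i : Fin (n + 1) => g i.castSucc)) ⊔
        g (Fin.last (n + 1)) := by
  apply le_antisymm
  · apply Finset.sup'_le
    intro i _
    induction i using Fin.lastCases with
    | last => exact le_sup_right
    | cast j =>
      exact le_sup_of_le_left (Finset.le_sup' (fun i : Fin (n+1) => g i.castSucc)
        (Finset.mem_univ j))
  · apply sup_le
    · apply Finset.sup'_le
      intro j _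
      exact Finset.le_sup' g (Finset.mem_univ j.castSucc)
    · exact Finset.le_sup' g (Finset.mem_univ (Fin.last (n + 1)))

/-- Condition (psiphi) of the paper: `Φ(x), Ψ(x) ∈ N(f(x))` for all `x`. -/
theorem PhiPsi_in_neighborhood {X Y : Type*} [DistribLattice X]
    [ConditionallyCompleteLattice Y]
    (hYdistrib : ∀ a b c : Y, a ⊓ (b ⊔ c) = (a ⊓ b) ⊔ (a ⊓ c))
    (hYdualinf : ∀ (y : Y) (S : Set Y), S.Nonempty → BddBelow S →
      y ⊔ sInf S = sInf ((fun s => y ⊔ s) '' S))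
    (N : Y → Set Y)
    (hNne : ∀ y, (N y).Nonempty)
    (hNbdd : ∀ y, BddAbove (N y) ∧ BddBelow (N y))
    (hN1 : ∀ y, y ∈ N y)
    (hN2 : ∀ z t u y : Y, t ∈ N z → u ∈ N z → t ≤ y → y ≤ u → y ∈ N z)
    (hN3 : ∀ y, sSup (N y) ∈ N y ∧ sInf (N y) ∈ N y)
    (hN4 : ∀ t u y z : Y, t ∈ N u → u ⊔ y ∈ N z → t ⊔ y ∈ N z)
    (f : X → Y) (hf : ∀ x y : X, f x ⊔ f y ∈ N (f (x ⊔ y)))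
    (Φ Ψ : X → Y)
    (hΦ : ∀ x : X, Φ x = sInf {y : Y | ∃ (n : ℕ) (xs : Fin (n + 1) → X),
      x = Finset.univ.sup' Finset.univ_nonempty xs ∧
      y = Finset.univ.sup' Finset.univ_nonempty (fun i => f (xs i))})
    (hΨ : ∀ x : X, Ψ x = sSup {y : Y | ∃ (n : ℕ) (xs : Fin (n + 1) → X),
      x = Finset.univ.sup' Finset.univ_nonempty xs ∧
      y = Finset.univ.sup' Finset.univ_nonempty (fun i => f (xs i))}) :
    ∀ x : X, Φ x ∈ N (f x) ∧ Ψ x ∈ N (f x) := by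
  -- Key: every element of the defining set lies in N (f x)
  have key : ∀ (n : ℕ) (xs : Fin (n + 1) → X),
      Finset.univ.sup' Finset.univ_nonempty (fun i => f (xs i)) ∈
        N (f (Finset.univ.sup' Finset.univ_nonempty xs)) := by
    intro n
    induction n with
    | zero =>
      intro xs
      have h1 : Finset.univ.sup' Finset.univ_nonempty xs = xs 0 := by
        apply le_antisymm
        · exact Finset.sup'_le _ _ (fun i _ => le_of_eq (congrArg xs (Fin.ext (by omega))))
        · exact Finset.le_sup' xs (Finset.mem_univ (0 : Fin (0 + 1)))
      have h2 : (Finset.univ.sup' Finset.univ_nonempty fun i => f (xs i)) = f (xs 0) := by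
        apply le_antisymm
        · exact Finset.sup'_le _ _
            (fun i _ => le_of_eq (congrArg (fun j => f (xs j)) (Fin.ext (by omega))))
        · exact Finset.le_sup' (fun i => f (xs i)) (Finset.mem_univ (0 : Fin (0 + 1)))
      rw [h1, h2]
      exact hN1 _
    | succ n ih =>
      intro xs
      rw [sup'_fin_split n (fun i => f (xs i)), sup'_fin_split n xs]
      exact hN4 _ _ _ _ (ih (fun i => xs i.castSucc))
        (hf (Finset.univ.sup' Finset.univ_nonempty (fun i : Fin (n+1) => xs i.castSucc))
          (xs (Fin.last (n + 1))))
  intro x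
  set S : Set Y := {y : Y | ∃ (n : ℕ) (xs : Fin (n + 1) → X),
      x = Finset.univ.sup' Finset.univ_nonempty xs ∧
      y = Finset.univ.sup' Finset.univ_nonempty (fun i => f (xs i))} with hS
  have hsub : S ⊆ N (f x) := by
    rintro y ⟨n, xs, hx, hy⟩
    rw [hy, hx]
    exact key n xs
  have hfxS : f x ∈ S := by
    refine ⟨0, fun _ => x, ?_, ?_⟩
    · apply le_antisymm
      · exact Finset.le_sup' (fun _ : Fin (0 + 1) => x) (Finset.mem_univ 0)
      · exact Finset.sup'_le _ _ (fun i _ => le_refl _)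
    · apply le_antisymm
      · exact Finset.le_sup' (fun _ : Fin (0 + 1) => f x) (Finset.mem_univ 0)
      · exact Finset.sup'_le _ _ (fun i _ => le_refl _)
  have hSne : S.Nonempty := ⟨f x, hfxS⟩
  have hbddA : BddAbove S := (hNbdd (f x)).1.mono hsub
  have hbddB : BddBelow S := (hNbdd (f x)).2.mono hsub
  have hinfN_le : sInf (N (f x)) ≤ sInf S :=
    le_csInf hSne (fun y hy => csInf_le (hNbdd (f x)).2 (hsub hy))
  have hle_supN : sSup S ≤ sSup (N (f x)) :=
    csSup_le hSne (fun y hy => le_csSup (hNbdd (f x)).1 (hsub hy))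
  constructor
  · rw [hΦ, ← hS]
    exact hN2 (f x) (sInf (N (f x))) (f x) (sInf S) (hN3 (f x)).2 (hN1 (f x))
      hinfN_le (csInf_le hbddB hfxS)
  · rw [hΨ, ← hS]
    exact hN2 (f x) (f x) (sSup (N (f x))) (sSup S) (hN1 (f x)) (hN3 (f x)).1
      (le_csSup hbddA hfxS) hle_supN
end

section
/- Let X be a lattice, Y a Boolean algebra, and ε ∈ Y. Suppose f : X → Y satisfies f(x ∨ y) Δ (f(x) ∨ f(y)) ≤ ε for all x, y ∈ X, where Δ denotes symmetric difference. Define g : X → Y by g(x) = f(x) \ ε (the relative complement f(x) ∧ εᶜ). Then g(x ∨ y) = g(x) ∨ g(y) for all x, y ∈ X, and f(x) Δ g(x) ≤ ε for every x ∈ X. -/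
lemma sdiff_eq_of_symmDiff_le {Y : Type*} [BooleanAlgebra Y] {a b ε : Y}
    (h : symmDiff a b ≤ ε) : a \ ε = b \ ε := by
  have h1 : a \ b ≤ ε := le_trans le_sup_left h
  have h2 : b \ a ≤ ε := le_trans le_sup_right h
  apply le_antisymm
  · have : a \ ε ≤ b := by
      calc a \ ε ≤ (b ⊔ a \ b) \ ε := sdiff_le_sdiff_right le_sup_sdiff
        _ ≤ (b ⊔ ε) \ ε := sdiff_le_sdiff_right (sup_le_sup_left h1 b)
        _ ≤ b := by rw [sup_sdiff_right_self]; exact sdiff_le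
    exact le_sdiff.mpr ⟨this, disjoint_sdiff_self_left⟩
  · have : b \ ε ≤ a := by
      calc b \ ε ≤ (a ⊔ b \ a) \ ε := sdiff_le_sdiff_right le_sup_sdiff
        _ ≤ (a ⊔ ε) \ ε := sdiff_le_sdiff_right (sup_le_sup_left h2 a)
        _ ≤ a := by rw [sup_sdiff_right_self]; exact sdiff_le
    exact le_sdiff.mpr ⟨this, disjoint_sdiff_self_left⟩

/-- The remark from the introduction: if `f(x ⊔ y) Δ (f(x) ⊔ f(y)) ≤ ε`, then
`g(x) = f(x) \ ε` is a join homomorphism with `f(x) Δ g(x) ≤ ε`. -/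
theorem naive_boolean_correction {X Y : Type*} [Lattice X] [BooleanAlgebra Y]
    (ε : Y) (f : X → Y)
    (hf : ∀ x y : X, symmDiff (f (x ⊔ y)) (f x ⊔ f y) ≤ ε)
    (g : X → Y) (hg : ∀ x : X, g x = f x \ ε) :
    (∀ x y : X, g (x ⊔ y) = g x ⊔ g y) ∧ ∀ x : X, symmDiff (f x) (g x) ≤ ε := by
  constructor
  · intro x y
    rw [hg, hg, hg, ← sup_sdiff, sdiff_eq_of_symmDiff_le (hf x y)]
  · intro x
    rw [hg, symmDiff_def, sdiff_sdiff_right_self]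
    simp only [sdiff_sdiff_self, sup_bot_eq, ge_iff_le]
    exact inf_le_right
end

section
/- Let D ⊆ ℝ, ε ≥ 0, and let f : D → ℝ satisfy max{f(x), f(y)} − f(max{x, y}) ≤ ε for all x, y ∈ D. Then there exists an increasing (monotone nondecreasing) function F : D → ℝ such that f(x) ≤ F(x) ≤ f(x) + ε for every x ∈ D. -/
/-- The intermediate claim in the proof of Corollary 1: there is an increasing
`F` with `f(x) ≤ F(x) ≤ f(x) + ε`. -/
theorem approx_increasing_upper_envelope (D : Set ℝ) (ε : ℝ) (hε : 0 ≤ ε)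
    (f : D → ℝ)
    (hf : ∀ x y : D, max (f x) (f y) - f (max x y) ≤ ε) :
    ∃ F : D → ℝ, Monotone F ∧ ∀ x : D, f x ≤ F x ∧ F x ≤ f x + ε := by
  have key : ∀ x y : D, y ≤ x → f y ≤ f x + ε := by
    intro x y hyx
    have h := hf y x
    have hmax : max y x = x := max_eq_right hyx
    rw [hmax] at h
    have := le_max_left (f y) (f x)
    linarith
  refine ⟨fun x => sSup (f '' {y | y ≤ x}), ?_, ?_⟩
  · intro a b hab
    apply csSup_le_csSup
    · exact ⟨f b + ε, by rintro _ ⟨y, hy, rfl⟩; exact key b y hy⟩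
    · exact ⟨f a, a, le_refl a, rfl⟩
    · exact Set.image_mono fun y hy => le_trans hy hab
  · intro x
    constructor
    · exact le_csSup ⟨f x + ε, by rintro _ ⟨y, hy, rfl⟩; exact key x y hy⟩
        ⟨x, le_refl x, rfl⟩
    · exact csSup_le ⟨f x, x, le_refl x, rfl⟩
        (by rintro _ ⟨y, hy, rfl⟩; exact key x y hy)
end
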